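/- arXiv:2105.08478 — 5 statements merged into one kernel-verified Lean document; each statement's English description precedes it below -/
import Mathlib

section
/- For every real C ≥ 2 and every real x ≥ sqrt(2/C), e^{-C x} / (1 - e^{-x}) ≤ e^{-C x / 4}. -/
theorem exp_div_one_sub_exp_le (C x : ℝ) (hC : 2 ≤ C) (hx : Real.sqrt (2 / C) ≤ x) :
    Real.exp (-C * x) / (1 - Real.exp (-x)) ≤ Real.exp (-C * x / 4) := by
  have hCpos : (0:ℝ) < C := by linarith
  have hxpos : 0 < x := lt_of_lt_of_le (Real.sqrt_pos.mpr (by positivity)) hx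
  have hx2 : 2 / C ≤ x ^ 2 := by
    have := Real.sq_sqrt (le_of_lt (show (0:ℝ) < 2 / C by positivity))
    nlinarith [pow_le_pow_left₀ (Real.sqrt_nonneg (2/C)) hx 2]
  have hCx2 : 2 ≤ C * x ^ 2 := by
    rw [div_le_iff₀ hCpos] at hx2; nlinarith
  have hlt : Real.exp (-x) < 1 := Real.exp_lt_one_iff.mpr (by linarith)
  have hpos : 0 < 1 - Real.exp (-x) := by linarith
  rw [div_le_iff₀ hpos]
  have key : Real.exp (-(3 * C * x / 4)) ≤ 1 - Real.exp (-x) := by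
    rcases le_or_gt x 1 with h1 | h1
    · -- x ≤ 1
      have hexp : Real.exp (-x) ≤ 1 / (1 + x) := by
        rw [Real.exp_neg, div_eq_inv_mul, mul_one]
        exact inv_anti₀ (by linarith) (by linarith [Real.add_one_le_exp x])
      have hsub : x / 2 ≤ 1 - Real.exp (-x) := by
        have : 1 / (1 + x) ≤ 1 - x / 2 := by
          rw [div_le_iff₀ (by linarith)]; nlinarith
        linarith
      have hmono : Real.exp (-(3 * C * x / 4)) ≤ Real.exp (-(3 / (2 * x))) := by
        apply Real.exp_le_exp.mpr
        have : 3 / (2 * x) ≤ 3 * C * x / 4 := by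
          rw [div_le_div_iff₀ (by linarith) (by norm_num)]; nlinarith
        linarith
      have hq : (1 + 3 / (4 * x)) ^ 2 ≤ Real.exp (3 / (2 * x)) := by
        have h2 : Real.exp (3 / (2 * x)) = Real.exp (3 / (4 * x)) ^ 2 := by
          rw [← Real.exp_nat_mul]; ring_nf
        rw [h2]
        have := Real.add_one_le_exp (3 / (4 * x))
        have h3 : (0:ℝ) ≤ 1 + 3 / (4 * x) := by positivity
        nlinarith
      have hfin : Real.exp (-(3 / (2 * x))) ≤ x / 2 := by
        rw [Real.exp_neg]
        have hqpos : (0:ℝ) < (1 + 3 / (4 * x)) ^ 2 := by positivity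
        have h4 : (Real.exp (3 / (2 * x)))⁻¹ ≤ ((1 + 3 / (4 * x)) ^ 2)⁻¹ :=
          inv_anti₀ hqpos hq
        have h5 : ((1 + 3 / (4 * x)) ^ 2)⁻¹ ≤ x / 2 := by
          rw [inv_le_iff_one_le_mul₀ hqpos]
          have hxinv : 0 < x⁻¹ := by positivity
          field_simp
          nlinarith [sq_nonneg (4*x - 3), sq_nonneg x]
        linarith
      linarith
    · -- 1 < x
      have hA : Real.exp (-(3 * C * x / 4)) ≤ Real.exp (-(3/2 : ℝ)) := by
        apply Real.exp_le_exp.mpr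
        nlinarith
      have hB : Real.exp (-(3/2 : ℝ)) ≤ 1 / 4 := by
        rw [Real.exp_neg]
        have h32 : Real.exp (3/2 : ℝ) = Real.exp 1 * Real.exp (1/2) := by
          rw [← Real.exp_add]; norm_num
        have he1 : (2.7:ℝ) ≤ Real.exp 1 := by
          linarith [Real.exp_one_gt_d9]
        have he2 : (1.5:ℝ) ≤ Real.exp (1/2 : ℝ) := by
          linarith [Real.add_one_le_exp (1/2 : ℝ)]
        have : (4:ℝ) ≤ Real.exp (3/2 : ℝ) := by
          rw [h32]; nlinarith [Real.exp_pos (1:ℝ)]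
        rw [inv_le_iff_one_le_mul₀ (by positivity)]
        nlinarith [Real.exp_pos (3/2:ℝ)]
      have hC' : Real.exp (-x) ≤ 1/2 := by
        have : Real.exp (-x) ≤ Real.exp (-1 : ℝ) := Real.exp_le_exp.mpr (by linarith)
        have h2 : Real.exp (-1 : ℝ) ≤ 1/2 := by
          rw [Real.exp_neg, inv_le_iff_one_le_mul₀ (Real.exp_pos 1)]
          nlinarith [Real.add_one_le_exp (1:ℝ)]
        linarith
      linarith
  calc Real.exp (-C * x) = Real.exp (-C * x / 4) * Real.exp (-(3 * C * x / 4)) := by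
        rw [← Real.exp_add]; ring_nf
    _ ≤ Real.exp (-C * x / 4) * (1 - Real.exp (-x)) := by
        exact mul_le_mul_of_nonneg_left key (Real.exp_pos _).le
end

section
/- For every natural number n ≥ 1 and every x ∈ [0,1], the sum over k from 1 to n-1 of binom(n,k) * x^{k(n-k)} is at most 2((1 + x^{n/2})^n - 1), which in turn is at most 2 n x^{n/2} e^{n x^{n/2}}. -/
theorem binomial_sum_bound (n : ℕ) (hn : 1 ≤ n) (x : ℝ) (hx0 : 0 ≤ x) (hx1 : x ≤ 1) :
    (∑ k ∈ Finset.Ico 1 n, (n.choose k : ℝ) * x ^ (k * (n - k)))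
      ≤ 2 * ((1 + x ^ ((n : ℝ) / 2)) ^ n - 1) ∧
    2 * ((1 + x ^ ((n : ℝ) / 2)) ^ n - 1)
      ≤ 2 * n * x ^ ((n : ℝ) / 2) * Real.exp (n * x ^ ((n : ℝ) / 2)) := by
  set y : ℝ := x ^ ((n : ℝ) / 2) with hy
  have hn2 : (0:ℝ) < (n : ℝ) / 2 := by positivity
  have hy0 : 0 ≤ y := Real.rpow_nonneg hx0 _
  have hy1 : y ≤ 1 := Real.rpow_le_one hx0 hx1 hn2.le
  -- binomial expansion
  have hbin : (1 + y) ^ n = ∑ k ∈ Finset.range (n+1), (n.choose k : ℝ) * y ^ k := by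
    rw [add_comm, add_pow]
    simp [mul_comm]
  constructor
  · -- Step A: termwise bound
    have hA : ∀ k ∈ Finset.Ico 1 n,
        (n.choose k : ℝ) * x ^ (k * (n - k)) ≤
          (n.choose k : ℝ) * (y ^ k + y ^ (n - k)) := by
      intro k hk
      simp only [Finset.mem_Ico] at hk
      obtain ⟨hk1, hkn⟩ := hk
      have hc0 : (0:ℝ) ≤ (n.choose k : ℝ) := by positivity
      apply mul_le_mul_of_nonneg_left _ hc0
      have hmin : x ^ (k * (n - k)) ≤ y ^ (min k (n - k)) := by
        rcases eq_or_lt_of_le hx0 with h0 | h0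
        · have hx : x = 0 := h0.symm
          have h1 : k * (n - k) ≠ 0 := by
            have : 1 ≤ n - k := by omega
            positivity
          have h2 : min k (n - k) ≠ 0 := by omega
          rw [hx, zero_pow h1]
          exact pow_nonneg hy0 _
        · -- x > 0
          have key : (n : ℝ) / 2 * (min k (n - k)) ≤ (k * (n - k) : ℕ) := by
            have hnat : n * min k (n - k) ≤ 2 * (k * (n - k)) := by
              rcases le_total k (n - k) with h | h
              · rw [min_eq_left h]
                have : n ≤ 2 * (n - k) := by omega
                calc n * k ≤ 2 * (n - k) * k := Nat.mul_le_mul_right k this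
                  _ = 2 * (k * (n - k)) := by ring
              · rw [min_eq_right h]
                have : n ≤ 2 * k := by omega
                calc n * (n - k) ≤ 2 * k * (n - k) := Nat.mul_le_mul_right _ this
                  _ = 2 * (k * (n - k)) := by ring
            have := (Nat.cast_le (α := ℝ)).2 hnat
            push_cast at this ⊢
            linarith
          have : y ^ (min k (n - k)) = x ^ ((n : ℝ) / 2 * (min k (n - k))) := by
            rw [hy, ← Real.rpow_natCast (x ^ ((n:ℝ)/2)) (min k (n-k)),
              ← Real.rpow_mul hx0]
          rw [this, ← Real.rpow_natCast x (k * (n - k))]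
          exact Real.rpow_le_rpow_of_exponent_ge h0 hx1 key
      have hle : y ^ (min k (n - k)) ≤ y ^ k + y ^ (n - k) := by
        rcases le_total k (n - k) with h | h
        · rw [min_eq_left h]; have := pow_nonneg hy0 (n - k); linarith
        · rw [min_eq_right h]; have := pow_nonneg hy0 k; linarith
      linarith
    have hsum := Finset.sum_le_sum hA
    -- reflection
    have hrefl : (∑ k ∈ Finset.Ico 1 n, (n.choose k : ℝ) * y ^ (n - k))
        = ∑ k ∈ Finset.Ico 1 n, (n.choose k : ℝ) * y ^ k := by
      apply Finset.sum_bij' (fun k _ => n - k) (fun k _ => n - k)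
      · intro a ha; simp only [Finset.mem_Ico] at ha ⊢; omega
      · intro a ha; simp only [Finset.mem_Ico] at ha ⊢; omega
      · intro a ha; simp only [Finset.mem_Ico] at ha; omega
      · intro a ha; simp only [Finset.mem_Ico] at ha; omega
      · intro a ha
        simp only [Finset.mem_Ico] at ha
        rw [Nat.choose_symm (by omega)]
    have hsplit : (∑ k ∈ Finset.Ico 1 n, (n.choose k : ℝ) * (y ^ k + y ^ (n - k)))
        = 2 * ∑ k ∈ Finset.Ico 1 n, (n.choose k : ℝ) * y ^ k := by
      rw [Finset.sum_congr rfl (fun k _ => mul_add _ _ _), Finset.sum_add_distrib, hrefl]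
      ring
    have htail : (∑ k ∈ Finset.Ico 1 n, (n.choose k : ℝ) * y ^ k)
        ≤ (1 + y) ^ n - 1 := by
      have h1 : (∑ k ∈ Finset.Ico 1 n, (n.choose k : ℝ) * y ^ k)
          ≤ ∑ k ∈ Finset.Ico 1 (n+1), (n.choose k : ℝ) * y ^ k := by
        apply Finset.sum_le_sum_of_subset_of_nonneg
        · exact Finset.Ico_subset_Ico le_rfl (by omega)
        · intro i _ _; positivity
      have h2 : (∑ k ∈ Finset.Ico 1 (n+1), (n.choose k : ℝ) * y ^ k)
          = (1 + y) ^ n - 1 := by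
        rw [hbin, Finset.range_eq_Ico,
          Finset.sum_eq_sum_Ico_succ_bot (by omega : 0 < n+1)]
        simp
      linarith
    linarith [hsum, hsplit, htail]
  · -- second inequality
    have hey : (1 + y) ^ n ≤ Real.exp ((n : ℝ) * y) := by
      rw [Real.exp_nat_mul]
      exact pow_le_pow_left₀ (by linarith) (by linarith [Real.add_one_le_exp y]) n
    have ht : (0:ℝ) ≤ (n : ℝ) * y := by positivity
    set t : ℝ := (n : ℝ) * y with hty
    have h3 : Real.exp t - 1 ≤ t * Real.exp t := by
      have h4 := Real.add_one_le_exp (-t)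
      have h5 : Real.exp (-t) = (Real.exp t)⁻¹ := Real.exp_neg t
      have h6 := Real.exp_pos t
      rw [h5] at h4
      have h7 : (-t + 1) * Real.exp t ≤ 1 := by
        calc (-t + 1) * Real.exp t ≤ (Real.exp t)⁻¹ * Real.exp t :=
              mul_le_mul_of_nonneg_right h4 h6.le
          _ = 1 := inv_mul_cancel₀ h6.ne'
      nlinarith [h7]
    have : (1 + y) ^ n - 1 ≤ t * Real.exp t := by linarith
    calc 2 * ((1 + y) ^ n - 1) ≤ 2 * (t * Real.exp t) := by linarith
      _ = 2 * n * y * Real.exp (n * y) := by rw [hty]; ring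
end

section
/- Let p, q ∈ (0,1) and define the Hellinger affinity ρ(p,q) = sqrt(p q) + sqrt((1-p)(1-q)). Then ρ(p,q) ≤ 1 - (1/2)(sqrt p - sqrt q)^2 + p q / 4. -/
theorem hellinger_affinity_bound (p q : ℝ) (hp0 : 0 < p) (hp1 : p < 1)
    (hq0 : 0 < q) (hq1 : q < 1) :
    Real.sqrt (p * q) + Real.sqrt ((1 - p) * (1 - q))
      ≤ 1 - (1 / 2) * (Real.sqrt p - Real.sqrt q) ^ 2 + p * q / 4 := by
  have hp' : (0:ℝ) ≤ 1 - p := by linarith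
  have hq' : (0:ℝ) ≤ 1 - q := by linarith
  have h1 : Real.sqrt (p * q) = Real.sqrt p * Real.sqrt q := Real.sqrt_mul hp0.le q
  have h2 : Real.sqrt ((1 - p) * (1 - q)) = Real.sqrt (1 - p) * Real.sqrt (1 - q) :=
    Real.sqrt_mul hp' _
  have hsp : Real.sqrt p ^ 2 = p := Real.sq_sqrt hp0.le
  have hsq : Real.sqrt q ^ 2 = q := Real.sq_sqrt hq0.le
  have hA : Real.sqrt (1 - p) ≤ 1 - p / 2 := by
    have : (1 - p) ≤ (1 - p / 2) ^ 2 := by nlinarith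
    calc Real.sqrt (1 - p) ≤ Real.sqrt ((1 - p / 2) ^ 2) := Real.sqrt_le_sqrt this
      _ = 1 - p / 2 := by rw [Real.sqrt_sq (by linarith)]
  have hB : Real.sqrt (1 - q) ≤ 1 - q / 2 := by
    have : (1 - q) ≤ (1 - q / 2) ^ 2 := by nlinarith
    calc Real.sqrt (1 - q) ≤ Real.sqrt ((1 - q / 2) ^ 2) := Real.sqrt_le_sqrt this
      _ = 1 - q / 2 := by rw [Real.sqrt_sq (by linarith)]
  have h3 : Real.sqrt (1 - p) * Real.sqrt (1 - q) ≤ (1 - p / 2) * (1 - q / 2) :=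
    mul_le_mul hA hB (Real.sqrt_nonneg _) (by linarith)
  rw [h1, h2]
  nlinarith [h3, hsp, hsq]
end

section
/- Let p_n = a log n / n and q_n = b log n / n with 0 < q_n ≤ p_n < 1. Then ρ(p_n,q_n)^{n/2} ≤ exp(-(1/4)(sqrt a - sqrt b)^2 log n + (1/(8n)) a b (log n)^2), where ρ(p,q) = sqrt(pq) + sqrt((1-p)(1-q)). -/
theorem hellinger_affinity_power_bound (n : ℕ) (hn : 2 ≤ n) (a b : ℝ)
    (ha : 0 < a) (hb : 0 < b)
    (hq0 : 0 < b * Real.log n / n)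
    (hqp : b * Real.log n / n ≤ a * Real.log n / n)
    (hp1 : a * Real.log n / n < 1) :
    (Real.sqrt ((a * Real.log n / n) * (b * Real.log n / n))
      + Real.sqrt ((1 - a * Real.log n / n) * (1 - b * Real.log n / n)))
        ^ ((n : ℝ) / 2)
    ≤ Real.exp (-(1 / 4) * (Real.sqrt a - Real.sqrt b) ^ 2 * Real.log n
        + (1 / (8 * n)) * a * b * (Real.log n) ^ 2) := by
  have hn0 : (0:ℝ) < n := by positivity
  have hL : 0 < Real.log n := Real.log_pos (by exact_mod_cast hn.trans_lt' one_lt_two)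
  set L := Real.log n with hLdef
  set p := a * L / n with hpdef
  set q := b * L / n with hqdef
  have hp0 : 0 < p := lt_of_lt_of_le hq0 hqp
  have hq1 : q < 1 := lt_of_le_of_lt hqp hp1
  have hsp : Real.sqrt p ^ 2 = p := Real.sq_sqrt hp0.le
  have hsq : Real.sqrt q ^ 2 = q := Real.sq_sqrt hq0.le
  have h1 : Real.sqrt ((1-p)*(1-q)) ≤ 1 - (p+q)/2 := by
    calc Real.sqrt ((1-p)*(1-q)) ≤ Real.sqrt ((1 - (p+q)/2)^2) := by
          apply Real.sqrt_le_sqrt; nlinarith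
      _ = 1 - (p+q)/2 := Real.sqrt_sq (by linarith)
  have hmul : Real.sqrt (p*q) = Real.sqrt p * Real.sqrt q := Real.sqrt_mul hp0.le q
  have hexp := Real.add_one_le_exp (-((Real.sqrt p - Real.sqrt q)^2/2))
  have h2 : Real.sqrt (p*q) + Real.sqrt ((1-p)*(1-q))
      ≤ Real.exp (-((Real.sqrt p - Real.sqrt q)^2/2)) := by nlinarith
  have hρ0 : 0 ≤ Real.sqrt (p*q) + Real.sqrt ((1-p)*(1-q)) := by positivity
  have h3 := Real.rpow_le_rpow hρ0 h2 (by positivity : (0:ℝ) ≤ (n:ℝ)/2)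
  refine h3.trans ?_
  rw [← Real.exp_log (Real.rpow_pos_of_pos (Real.exp_pos _) _),
    Real.log_rpow (Real.exp_pos _), Real.log_exp, Real.exp_le_exp]
  have hsqrtp : Real.sqrt p = Real.sqrt a * Real.sqrt (L/n) := by
    rw [show p = a * (L/n) by rw [hpdef]; ring, Real.sqrt_mul ha.le]
  have hsqrtq : Real.sqrt q = Real.sqrt b * Real.sqrt (L/n) := by
    rw [show q = b * (L/n) by rw [hqdef]; ring, Real.sqrt_mul hb.le]
  have hs2 : Real.sqrt (L/n) ^ 2 = L/n := Real.sq_sqrt (by positivity)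
  have hdiff : (Real.sqrt p - Real.sqrt q)^2 = (Real.sqrt a - Real.sqrt b)^2 * (L/n) := by
    rw [hsqrtp, hsqrtq, show Real.sqrt a * Real.sqrt (L/n) - Real.sqrt b * Real.sqrt (L/n)
      = (Real.sqrt a - Real.sqrt b) * Real.sqrt (L/n) from by ring, mul_pow, hs2]
  have hextra : 0 ≤ (1 / (8 * (n:ℝ))) * a * b * L ^ 2 := by positivity
  have heq : (n:ℝ)/2 * -((Real.sqrt a - Real.sqrt b)^2 * (L/n)/2)
      = -(1 / 4) * (Real.sqrt a - Real.sqrt b) ^ 2 * L := by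
    field_simp; ring
  rw [hdiff]
  nlinarith [hextra, heq]
end

section
/- For r ∈ (0,1), n ∈ ℕ, and m1, m2 ∈ {0,...,⌊n/2⌋}, the ratio (r^{m1}(1-r)^{n-m1} + r^{n-m1}(1-r)^{m1}) / (r^{m2}(1-r)^{n-m2} + r^{n-m2}(1-r)^{m2}) is bounded above by 2 * max(r/(1-r), (1-r)/r)^{m2 - m1} and below by (1/2) * max(r/(1-r), (1-r)/r)^{m2 - m1}. -/
lemma ratio_eq_aux (r s : ℝ) (hr : r ≠ 0) (hs : s ≠ 0) (n m1 m2 : ℕ)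
    (h1 : m1 ≤ n) (h2 : m2 ≤ n) :
    r ^ m1 * s ^ (n - m1) = (s / r) ^ ((m2 : ℤ) - (m1 : ℤ)) * (r ^ m2 * s ^ (n - m2)) := by
  rcases le_total m1 m2 with h | h
  · obtain ⟨k, rfl⟩ : ∃ k, m2 = m1 + k := ⟨m2 - m1, by omega⟩
    have e : ((m1 + k : ℕ) : ℤ) - (m1 : ℤ) = (k : ℤ) := by push_cast; ring
    rw [e, zpow_natCast]
    have e2 : n - m1 = (n - (m1 + k)) + k := by omega
    rw [e2, pow_add, pow_add, div_pow]
    field_simp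
  · obtain ⟨k, rfl⟩ : ∃ k, m1 = m2 + k := ⟨m1 - m2, by omega⟩
    have e : (m2 : ℤ) - ((m2 + k : ℕ) : ℤ) = -(k : ℤ) := by push_cast; ring
    rw [e, zpow_neg, zpow_natCast]
    have e2 : n - m2 = (n - (m2 + k)) + k := by omega
    rw [e2, pow_add, pow_add, div_pow]
    field_simp

lemma key_bound (r s : ℝ) (hr : 0 < r) (hs : 0 < s) (hrs : r ≤ s) (n m1 m2 : ℕ)
    (hm1 : 2 * m1 ≤ n) (hm2 : 2 * m2 ≤ n) :
    (1 / 2) * (s / r) ^ ((m2 : ℤ) - (m1 : ℤ))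
      ≤ (r ^ m1 * s ^ (n - m1) + r ^ (n - m1) * s ^ m1) /
        (r ^ m2 * s ^ (n - m2) + r ^ (n - m2) * s ^ m2) ∧
    (r ^ m1 * s ^ (n - m1) + r ^ (n - m1) * s ^ m1) /
        (r ^ m2 * s ^ (n - m2) + r ^ (n - m2) * s ^ m2)
      ≤ 2 * (s / r) ^ ((m2 : ℤ) - (m1 : ℤ)) := by
  have domin : ∀ m : ℕ, 2 * m ≤ n → r ^ (n - m) * s ^ m ≤ r ^ m * s ^ (n - m) := by
    intro m hm
    have e : n - m = m + (n - 2 * m) := by omega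
    have hk : r ^ (n - 2 * m) ≤ s ^ (n - 2 * m) := pow_le_pow_left₀ hr.le hrs _
    rw [e, pow_add, pow_add]
    have h0 : (0:ℝ) ≤ r ^ m * s ^ m := by positivity
    calc r ^ m * r ^ (n - 2*m) * s ^ m = (r ^ m * s ^ m) * r ^ (n - 2*m) := by ring
      _ ≤ (r ^ m * s ^ m) * s ^ (n - 2*m) := by
          exact mul_le_mul_of_nonneg_left hk h0
      _ = r ^ m * (s ^ m * s ^ (n - 2*m)) := by ring
  set a1 := r ^ m1 * s ^ (n - m1) with ha1
  set b1 := r ^ (n - m1) * s ^ m1 with hb1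
  set a2 := r ^ m2 * s ^ (n - m2) with ha2
  set b2 := r ^ (n - m2) * s ^ m2 with hb2
  set C := (s / r) ^ ((m2 : ℤ) - (m1 : ℤ)) with hC
  have hCpos : 0 < C := by positivity
  have heq : a1 = C * a2 := ratio_eq_aux r s hr.ne' hs.ne' n m1 m2 (by omega) (by omega)
  have hd1 : b1 ≤ a1 := domin m1 hm1
  have hd2 : b2 ≤ a2 := domin m2 hm2
  have ha2p : 0 < a2 := by positivity
  have hb2p : 0 < b2 := by positivity
  have hb1p : 0 < b1 := by positivity
  have hden : 0 < a2 + b2 := by linarith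
  constructor
  · rw [le_div_iff₀ hden]
    nlinarith [mul_nonneg hCpos.le (sub_nonneg.2 hd2)]
  · rw [div_le_iff₀ hden]
    nlinarith [mul_nonneg hCpos.le hb2p.le]

theorem prior_ratio_bound (r : ℝ) (hr0 : 0 < r) (hr1 : r < 1) (n m1 m2 : ℕ)
    (hm1 : m1 ≤ n / 2) (hm2 : m2 ≤ n / 2) :
    (1 / 2) * (max (r / (1 - r)) ((1 - r) / r)) ^ ((m2 : ℤ) - (m1 : ℤ))
      ≤ (r ^ m1 * (1 - r) ^ (n - m1) + r ^ (n - m1) * (1 - r) ^ m1) /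
        (r ^ m2 * (1 - r) ^ (n - m2) + r ^ (n - m2) * (1 - r) ^ m2) ∧
    (r ^ m1 * (1 - r) ^ (n - m1) + r ^ (n - m1) * (1 - r) ^ m1) /
        (r ^ m2 * (1 - r) ^ (n - m2) + r ^ (n - m2) * (1 - r) ^ m2)
      ≤ 2 * (max (r / (1 - r)) ((1 - r) / r)) ^ ((m2 : ℤ) - (m1 : ℤ)) := by
  have hs : 0 < 1 - r := by linarith
  have hm1' : 2 * m1 ≤ n := by omega
  have hm2' : 2 * m2 ≤ n := by omega
  rcases le_total r (1 - r) with h | h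
  · have hmax : max (r / (1 - r)) ((1 - r) / r) = (1 - r) / r := by
      apply max_eq_right
      rw [div_le_div_iff₀ hs hr0]
      nlinarith
    rw [hmax]
    exact key_bound r (1 - r) hr0 hs h n m1 m2 hm1' hm2'
  · have hmax : max (r / (1 - r)) ((1 - r) / r) = r / (1 - r) := by
      apply max_eq_left
      rw [div_le_div_iff₀ hr0 hs]
      nlinarith
    rw [hmax]
    obtain ⟨hl, hu⟩ := key_bound (1 - r) r hs hr0 h n m1 m2 hm1' hm2'
    have e1 : (1-r) ^ m1 * r ^ (n - m1) + (1-r) ^ (n - m1) * r ^ m1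
        = r ^ m1 * (1 - r) ^ (n - m1) + r ^ (n - m1) * (1 - r) ^ m1 := by ring
    have e2 : (1-r) ^ m2 * r ^ (n - m2) + (1-r) ^ (n - m2) * r ^ m2
        = r ^ m2 * (1 - r) ^ (n - m2) + r ^ (n - m2) * (1 - r) ^ m2 := by ring
    have e3 : r / (1 - r) = r / (1 - r) := rfl
    rw [e1, e2] at hl hu
    exact ⟨hl, hu⟩
end
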